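/- Define u_n = Σ_{ν=0}^{n} ((1/2)_ν^3 / ν!^3) · ((1/2)_{n-ν} / (n-ν)!) for n ≥ 0, where (x)_k denotes the Pochhammer symbol. Then for every integer n ≥ 1, the recurrence 8(n+1)^3 u_{n+1} - (2n+1)(8n^2+8n+5) u_n + 8n^3 u_{n-1} = 0 holds. -/
import Mathlib


open Nat

/-- Pochhammer symbol `(x)_n = x(x+1)⋯(x+n-1)` over the rationals. -/
noncomputable def pochQ (x : ℚ) (n : ℕ) : ℚ := (ascPochhammer ℚ n).eval x

/-- The sequence `u_n` from identity (7). -/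
noncomputable def u (n : ℕ) : ℚ :=
  ∑ ν ∈ Finset.range (n + 1),
    (pochQ (1 / 2) ν) ^ 3 / ((ν ! : ℚ)) ^ 3 * (pochQ (1 / 2) (n - ν) / ((n - ν)! : ℚ))

/-- `(1/2)_ν^3 / ν!^3`. -/
noncomputable def wA (ν : ℕ) : ℚ := (pochQ (1 / 2) ν) ^ 3 / ((ν ! : ℚ)) ^ 3

/-- `(1/2)_m / m!`. -/
noncomputable def wB (m : ℕ) : ℚ := pochQ (1 / 2) m / ((m ! : ℚ))

/-- The WZ-style certificate `G(n,ν) = 8ν³ a_ν b_{n+1-ν} / (2(n-ν)+1)`. -/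
noncomputable def wG (n ν : ℕ) : ℚ :=
  8 * (ν : ℚ) ^ 3 * wA ν * wB (n + 1 - ν) / (2 * ((n : ℚ) - (ν : ℚ)) + 1)

lemma pochQ_succ (x : ℚ) (k : ℕ) : pochQ x (k + 1) = pochQ x k * (x + k) := by
  simp [pochQ, ascPochhammer_succ_eval]

lemma factQ_ne (k : ℕ) : ((k ! : ℚ)) ≠ 0 := by
  exact_mod_cast (Nat.factorial_ne_zero k)

lemma wB_succ (m : ℕ) : wB (m + 1) = wB m * (2 * m + 1) / (2 * m + 2) := by
  have h := factQ_ne m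
  have h2 : ((m : ℚ) + 1) ≠ 0 := by positivity
  simp only [wB, pochQ_succ, Nat.factorial_succ]
  push_cast
  field_simp
  ring

lemma wA_succ (ν : ℕ) : wA (ν + 1) = wA ν * (2 * ν + 1) ^ 3 / (2 * ν + 2) ^ 3 := by
  have h := factQ_ne ν
  have h2 : ((ν : ℚ) + 1) ≠ 0 := by positivity
  simp only [wA, pochQ_succ, Nat.factorial_succ]
  push_cast
  field_simp
  ring

lemma wB_zero : wB 0 = 1 := by simp [wB, pochQ]

lemma wB_one : wB 1 = 1 / 2 := by
  rw [show (1:ℕ) = 0 + 1 from rfl, wB_succ, wB_zero]; norm_num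

/-- The key telescoping (creative telescoping / WZ) identity, away from the boundary. -/
lemma wKey (ν k : ℕ) :
    8 * ((ν:ℚ) + k + 2) ^ 3 * (wA ν * wB (k + 2))
      - (2 * ((ν:ℚ) + k + 1) + 1) * (8 * ((ν:ℚ)+k+1)^2 + 8*((ν:ℚ)+k+1) + 5) * (wA ν * wB (k + 1))
      + 8 * ((ν:ℚ) + k + 1) ^ 3 * (wA ν * wB k)
    = 8 * ((ν:ℚ)+1)^3 * wA (ν+1) * wB (k+1) / (2*k+1)
      - 8 * (ν:ℚ)^3 * wA ν * wB (k+2) / (2*k+3) := by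
  simp only [wA_succ, wB_succ]
  have h1 : (2*(k:ℚ)+1) ≠ 0 := by positivity
  have h2 : (2*(k:ℚ)+2) ≠ 0 := by positivity
  have h3 : (2*(k:ℚ)+3) ≠ 0 := by positivity
  have h4 : (2*(k:ℚ)+4) ≠ 0 := by positivity
  have h5 : (2*(ν:ℚ)+2) ≠ 0 := by positivity
  push_cast
  field_simp
  ring

lemma hu (m : ℕ) : u m = ∑ ν ∈ Finset.range (m + 1), wA ν * wB (m - ν) := rfl

/-- The recurrence (8) satisfied by `u_n`. -/
theorem u_recurrence (n : ℕ) (hn : 1 ≤ n) :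
    8 * ((n : ℚ) + 1) ^ 3 * u (n + 1)
      - (2 * (n : ℚ) + 1) * (8 * (n : ℚ) ^ 2 + 8 * (n : ℚ) + 5) * u n
      + 8 * (n : ℚ) ^ 3 * u (n - 1) = 0 := by
  obtain ⟨N, rfl⟩ : ∃ N, n = N + 1 := ⟨n - 1, by omega⟩
  simp only [Nat.add_sub_cancel]
  have e1 : u (N + 1 + 1) = (∑ ν ∈ Finset.range (N + 1), wA ν * wB (N + 2 - ν))
      + wA (N + 1) * wB 1 + wA (N + 2) * wB 0 := by
    rw [hu, Finset.sum_range_succ, Finset.sum_range_succ,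
      show N + 1 + 1 - (N + 1) = 1 from by omega,
      show N + 1 + 1 - (N + 2) = 0 from by omega]
  have e2 : u (N + 1) = (∑ ν ∈ Finset.range (N + 1), wA ν * wB (N + 1 - ν))
      + wA (N + 1) * wB 0 := by
    rw [hu, Finset.sum_range_succ, show N + 1 - (N + 1) = 0 from by omega]
  have e3 : u N = ∑ ν ∈ Finset.range (N + 1), wA ν * wB (N - ν) := hu N
  have hkey : ∀ ν ∈ Finset.range (N + 1),
      8 * ((N:ℚ)+2)^3 * (wA ν * wB (N + 2 - ν))
        - (2*((N:ℚ)+1)+1) * (8*((N:ℚ)+1)^2 + 8*((N:ℚ)+1) + 5) * (wA ν * wB (N + 1 - ν))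
        + 8 * ((N:ℚ)+1)^3 * (wA ν * wB (N - ν))
      = wG (N + 1) (ν + 1) - wG (N + 1) ν := by
    intro ν hν
    simp only [Finset.mem_range] at hν
    obtain ⟨k, rfl⟩ : ∃ k, N = ν + k := ⟨N - ν, by omega⟩
    rw [show ν + k + 2 - ν = k + 2 from by omega,
        show ν + k + 1 - ν = k + 1 from by omega,
        show ν + k - ν = k from by omega]
    have g1 : wG (ν + k + 1) (ν + 1)
        = 8 * ((ν:ℚ)+1)^3 * wA (ν+1) * wB (k+1) / (2*(k:ℚ)+1) := by
      simp only [wG, show ν + k + 1 + 1 - (ν + 1) = k + 1 from by omega]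
      push_cast
      congr 1
      ring
    have g2 : wG (ν + k + 1) ν
        = 8 * (ν:ℚ)^3 * wA ν * wB (k+2) / (2*(k:ℚ)+3) := by
      simp only [wG, show ν + k + 1 + 1 - ν = k + 2 from by omega]
      push_cast
      congr 1
      ring
    rw [g1, g2]
    push_cast
    linear_combination wKey ν k
  have hsum : ∑ ν ∈ Finset.range (N + 1), (wG (N + 1) (ν + 1) - wG (N + 1) ν)
      = wG (N + 1) (N + 1) - wG (N + 1) 0 := Finset.sum_range_sub (wG (N + 1)) (N + 1)
  have hG0 : wG (N + 1) 0 = 0 := by simp [wG]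
  have hGt : wG (N + 1) (N + 1) = 8 * ((N:ℚ)+1)^3 * wA (N + 1) * wB 1 := by
    simp only [wG, show N + 1 + 1 - (N + 1) = 1 from by omega, sub_self]
    push_cast
    norm_num
  have hS : ∑ ν ∈ Finset.range (N + 1),
      (8 * ((N:ℚ)+2)^3 * (wA ν * wB (N + 2 - ν))
        - (2*((N:ℚ)+1)+1) * (8*((N:ℚ)+1)^2 + 8*((N:ℚ)+1) + 5) * (wA ν * wB (N + 1 - ν))
        + 8 * ((N:ℚ)+1)^3 * (wA ν * wB (N - ν)))
      = wG (N + 1) (N + 1) - wG (N + 1) 0 := by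
    rw [← hsum]; exact Finset.sum_congr rfl hkey
  rw [Finset.sum_add_distrib, Finset.sum_sub_distrib, ← Finset.mul_sum, ← Finset.mul_sum,
    ← Finset.mul_sum, hG0, hGt] at hS
  have hA2 : wA (N + 2) * (2*(N:ℚ)+4)^3 = wA (N + 1) * (2*(N:ℚ)+3)^3 := by
    have h : (2*(N:ℚ)+4) ≠ 0 := by positivity
    rw [show N + 2 = N + 1 + 1 from rfl, wA_succ (N + 1)]
    push_cast
    field_simp
    ring
  rw [e1, e2, e3, wB_zero, wB_one] at *
  push_cast
  linear_combination hS + hA2
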